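/- Let T be a 1-uniform deterministic finite-state transducer with state set V and input alphabet Δ, and let x be a k-automatic sequence over Δ (k ≥ 2). Then the transduced sequence T(x), whose n-th term is σ(φ*(v₀, x₀⋯x_{n−1}), x_n), is k-automatic. -/

import Mathlib

/-- A sequence `x` over `Γ` is `k`-automatic if some DFAO, reading the msd-first
base-`k` representation of `n`, outputs `x n`. -/
def IsKAutomatic (k : ℕ) {Γ : Type} (x : ℕ → Γ) : Prop :=
  ∃ (Q : Type) (_ : Fintype Q) (δ : Q → ℕ → Q) (q0 : Q) (out : Q → Γ),
    ∀ n : ℕ, x n = out (((Nat.digits k n).reverse).foldl δ q0)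

namespace DekkingAux

variable {Δ V Q : Type}

/-- original automaton with a leading-zeros flag: `false` = only zeros read so far. -/
def dd (δ : Q → ℕ → Q) : Q × Bool → ℕ → Q × Bool :=
  fun p d => if p.2 then (δ p.1 d, true) else if d = 0 then p else (δ p.1 d, true)

/-- `Ps φ x a m` : the map `V → V` induced by the factor `x a, x (a+1), …, x (a+m-1)`. -/
def Ps (φ : V → Δ → V) (x : ℕ → Δ) : ℕ → ℕ → V → V
  | _, 0, v => v
  | a, m + 1, v => Ps φ x (a + 1) m (φ v (x a))

/-- one-letter block map, read off the automaton state. -/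
def tau (φ : V → Δ → V) (out : Q → Δ) : Q × Bool → V → V :=
  fun r v => φ v (out r.1)

/-- passes from the level-`i` block map to the level-`i+1` block map. -/
def Lam (k : ℕ) (δ : Q → ℕ → Q) :
    ((Q × Bool) → V → V) → (Q × Bool) → V → V :=
  fun ψ r v => (List.range k).foldl (fun w e => ψ (dd δ r e) w) v

/-- the new automaton's transition map. -/
def dS (k : ℕ) (δ : Q → ℕ → Q) :
    ((Q × Bool) × (((Q × Bool) → V → V) → V → V)) → ℕ →
      ((Q × Bool) × (((Q × Bool) → V → V) → V → V)) :=
  fun s d =>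
    (dd δ s.1 d,
     fun ψ v => (List.range d).foldl (fun w e => ψ (dd δ s.1 e) w) (s.2 (Lam k δ ψ) v))

/-- value of an msd-first digit string. -/
def val (k : ℕ) (u : List ℕ) : ℕ := Nat.ofDigits k u.reverse

lemma val_nil (k : ℕ) : val k [] = 0 := by simp [val]

lemma val_append (k : ℕ) (u : List ℕ) (d : ℕ) :
    val k (u ++ [d]) = k * val k u + d := by
  simp [val, Nat.ofDigits_cons, Nat.ofDigits]
  ring

lemma val_cons_zero (k : ℕ) (u : List ℕ) : val k (0 :: u) = val k u := by
  simp [val, Nat.ofDigits_append, Nat.ofDigits]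

lemma Ps_add (φ : V → Δ → V) (x : ℕ → Δ) (m : ℕ) :
    ∀ (a n : ℕ) (v : V), Ps φ x a (m + n) v = Ps φ x (a + m) n (Ps φ x a m v) := by
  induction m with
  | zero => intro a n v; simp [Ps]
  | succ m ih =>
      intro a n v
      have : m + 1 + n = (m + n) + 1 := by ring
      rw [this]
      show Ps φ x (a + 1) (m + n) (φ v (x a)) = _
      rw [ih (a + 1) n (φ v (x a))]
      have : a + 1 + m = a + (m + 1) := by ring
      rw [this]
      rfl

lemma Ps_one (φ : V → Δ → V) (x : ℕ → Δ) (a : ℕ) (v : V) :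
    Ps φ x a 1 v = φ v (x a) := rfl

/-- folding `j` consecutive `t`-blocks. -/
lemma foldl_blocks (φ : V → Δ → V) (x : ℕ → Δ) (g : ℕ → V → V) :
    ∀ (j a t : ℕ) (v : V), (∀ e < j, ∀ w, g e w = Ps φ x (a + e * t) t w) →
      (List.range j).foldl (fun w e => g e w) v = Ps φ x a (j * t) v := by
  intro j
  induction j with
  | zero => intro a t v _; simp [Ps]
  | succ j ih =>
      intro a t v hg
      rw [List.range_succ, List.foldl_append]
      simp only [List.foldl_cons, List.foldl_nil]
      rw [ih a t v (fun e he w => hg e (Nat.lt_succ_of_lt he) w)]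
      rw [hg j (Nat.lt_succ_self j)]
      have h1 : (j + 1) * t = j * t + t := by ring
      rw [h1, Ps_add]

lemma fst_foldl_dS (k : ℕ) (δ : Q → ℕ → Q) (φ : V → Δ → V) :
    ∀ (u : List ℕ) (s : (Q × Bool) × (((Q × Bool) → V → V) → V → V)),
      (u.foldl (dS (V := V) k δ) s).1 = u.foldl (dd δ) s.1 := by
  intro u
  induction u with
  | nil => intro s; rfl
  | cons d u ih => intro s; exact ih (dS k δ s d)

lemma fst_foldl_dd_true (δ : Q → ℕ → Q) :
    ∀ (u : List ℕ) (q : Q), (u.foldl (dd δ) (q, true)).1 = u.foldl δ q := by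
  intro u
  induction u with
  | nil => intro q; rfl
  | cons d u ih => intro q; simpa [dd] using ih (δ q d)

/-- correctness of the leading-zero-robust automaton. -/
lemma fst_foldl_dd (k : ℕ) (hk : 2 ≤ k) (δ : Q → ℕ → Q) (q0 : Q) :
    ∀ (u : List ℕ), (∀ d ∈ u, d < k) →
      (u.foldl (dd δ) (q0, false)).1 =
        ((Nat.digits k (val k u)).reverse).foldl δ q0 := by
  intro u
  induction u with
  | nil => simp [val]
  | cons d u ih =>
      intro hu
      by_cases hd : d = 0
      · subst hd
        rw [val_cons_zero]
        have : (0 :: u).foldl (dd δ) (q0, false) = u.foldl (dd δ) (q0, false) := by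
          simp [dd]
        rw [this]
        exact ih (fun e he => hu e (List.mem_cons_of_mem _ he))
      · -- no leading zero: the digits of the value are exactly `u.reverse ++ ...`
        have hlt : ∀ l ∈ (d :: u).reverse, l < k := by
          intro l hl; exact hu l (List.mem_reverse.mp hl)
        have hlast : ∀ (h : (d :: u).reverse ≠ []),
            ((d :: u).reverse).getLast h ≠ 0 := by
          intro h
          simpa [List.getLast_append] using hd
        have hdig : Nat.digits k (val k (d :: u)) = (d :: u).reverse := by
          unfold val
          exact Nat.digits_ofDigits k (by omega) _ hlt hlast
        rw [hdig, List.reverse_reverse]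
        have h1 : (d :: u).foldl (dd δ) (q0, false) = u.foldl (dd δ) (δ q0 d, true) := by
          simp [dd, hd]
        rw [h1, fst_foldl_dd_true]
        rfl

end DekkingAux

open DekkingAux in
/-- Dekking's theorem: the transduction of a k-automatic sequence by a 1-uniform
deterministic finite-state transducer is k-automatic. -/
theorem transduction_automatic {Δ Γ V : Type} [Fintype V]
    (φ : V → Δ → V) (v0 : V) (σ : V → Δ → Γ)
    (k : ℕ) (hk : 2 ≤ k) (x : ℕ → Δ) (hx : IsKAutomatic k x) :
    IsKAutomatic k (fun n => σ ((List.ofFn (fun i : Fin n => x i)).foldl φ v0) (x n)) := by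
  obtain ⟨Q, instQ, δ, q0, out, hout⟩ := hx
  classical
  -- value of the automaton's output along padded words
  have hx_val : ∀ u : List ℕ, (∀ d ∈ u, d < k) →
      out ((u.foldl (dd δ) (q0, false)).1) = x (val k u) := by
    intro u hu
    rw [fst_foldl_dd k hk δ q0 u hu, ← hout]
  -- level-i block maps are computed by iterating Lam on tau
  have hPsi : ∀ (i : ℕ) (u : List ℕ), (∀ d ∈ u, d < k) →
      (Lam (V := V) k δ)^[i] (tau φ out) (u.foldl (dd δ) (q0, false)) =
        Ps φ x (val k u * k ^ i) (k ^ i) := by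
    intro i
    induction i with
    | zero =>
        intro u hu
        funext v
        simp only [Function.iterate_zero, id_eq, pow_zero, mul_one]
        show φ v (out ((u.foldl (dd δ) (q0, false)).1)) = _
        rw [hx_val u hu]
        exact (Ps_one φ x (val k u) v).symm
    | succ i ih =>
        intro u hu
        funext v
        rw [Function.iterate_succ_apply']
        show (List.range k).foldl
            (fun w e => (Lam (V := V) k δ)^[i] (tau φ out)
              (dd δ (u.foldl (dd δ) (q0, false)) e) w) v = _
        have key : ∀ e < k, ∀ w : V,
            (Lam (V := V) k δ)^[i] (tau φ out)
              (dd δ (u.foldl (dd δ) (q0, false)) e) w =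
            Ps φ x (val k u * k ^ (i + 1) + e * k ^ i) (k ^ i) w := by
          intro e he w
          have h1 : dd δ (u.foldl (dd δ) (q0, false)) e =
              (u ++ [e]).foldl (dd δ) (q0, false) := by
            simp
          have h2 : ∀ d ∈ u ++ [e], d < k := by
            intro d hd
            rcases List.mem_append.mp hd with h | h
            · exact hu d h
            · simp at h; omega
          rw [h1, ih (u ++ [e]) h2, val_append]
          have : (k * val k u + e) * k ^ i = val k u * k ^ (i + 1) + e * k ^ i := by
            ring
          rw [this]
        rw [foldl_blocks φ x _ k (val k u * k ^ (i + 1)) (k ^ i) v key]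
        have : k * k ^ i = k ^ (i + 1) := by ring
        rw [this]
  -- main invariant for the G-component
  have hG : ∀ u : List ℕ, (∀ d ∈ u, d < k) → ∀ (i : ℕ) (v : V),
      (u.foldl (dS (V := V) k δ) ((q0, false), fun _ v => v)).2
          ((Lam (V := V) k δ)^[i] (tau φ out)) v =
        Ps φ x 0 (val k u * k ^ i) v := by
    intro u
    induction u using List.reverseRecOn with
    | nil => intro _ i v; simp [val, Ps]
    | append_singleton u d ih =>
        intro hu i v
        have hu' : ∀ e ∈ u, e < k := fun e he => hu e (List.mem_append_left _ he)
        have hd : d < k := hu d (by simp)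
        rw [List.foldl_append]
        show (List.range d).foldl
            (fun w e => (Lam (V := V) k δ)^[i] (tau φ out)
              (dd δ (u.foldl (dS (V := V) k δ) ((q0, false), fun _ v => v)).1 e) w)
            ((u.foldl (dS (V := V) k δ) ((q0, false), fun _ v => v)).2
              (Lam (V := V) k δ ((Lam (V := V) k δ)^[i] (tau φ out))) v) = _
        have hfst : (u.foldl (dS (V := V) k δ) ((q0, false), fun _ v => v)).1 =
            u.foldl (dd δ) (q0, false) := fst_foldl_dS k δ φ u _
        have hiter : Lam (V := V) k δ ((Lam (V := V) k δ)^[i] (tau φ out)) =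
            (Lam (V := V) k δ)^[i + 1] (tau φ out) :=
          (Function.iterate_succ_apply' _ _ _).symm
        rw [hiter, ih hu' (i + 1) v]
        have key : ∀ e < d, ∀ w : V,
            (Lam (V := V) k δ)^[i] (tau φ out)
              (dd δ (u.foldl (dS (V := V) k δ) ((q0, false), fun _ v => v)).1 e) w =
            Ps φ x (val k u * k ^ (i + 1) + e * k ^ i) (k ^ i) w := by
          intro e he w
          rw [hfst]
          have h1 : dd δ (u.foldl (dd δ) (q0, false)) e =
              (u ++ [e]).foldl (dd δ) (q0, false) := by simp
          have h2 : ∀ d' ∈ u ++ [e], d' < k := by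
            intro d' hd'
            rcases List.mem_append.mp hd' with h | h
            · exact hu' d' h
            · simp at h; omega
          rw [h1, hPsi i (u ++ [e]) h2, val_append]
          have : (k * val k u + e) * k ^ i = val k u * k ^ (i + 1) + e * k ^ i := by
            ring
          rw [this]
        rw [foldl_blocks φ x _ d (val k u * k ^ (i + 1)) (k ^ i)
            (Ps φ x 0 (val k u * k ^ (i + 1)) v) key]
        have harith : val k (u ++ [d]) * k ^ i =
            val k u * k ^ (i + 1) + d * k ^ i := by
          rw [val_append]; ring
        rw [harith, Ps_add φ x (val k u * k ^ (i + 1)) 0 (d * k ^ i) v]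
        norm_num
  -- the prefix product in the statement is `Ps 0 n`
  have hPfx : ∀ (n : ℕ) (v : V),
      (List.ofFn (fun i : Fin n => x i)).foldl φ v = Ps φ x 0 n v := by
    intro n
    induction n with
    | zero => intro v; simp [Ps]
    | succ n ih =>
        intro v
        rw [List.ofFn_succ']
        simp only [Fin.coe_castSucc, Fin.val_last, List.concat_eq_append,
          List.foldl_append, List.foldl_cons, List.foldl_nil]
        rw [ih v]
        have : n + 1 = n + 1 := rfl
        rw [show (n + 1) = n + 1 from rfl, Ps_add φ x n 0 1 v]
        simp [Ps_one]
  -- assemble the new DFAO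
  refine ⟨(Q × Bool) × (((Q × Bool) → V → V) → V → V), ?_,
    dS (V := V) k δ, ((q0, false), fun _ v => v),
    fun s => σ (s.2 (tau φ out) v0) (out s.1.1), ?_⟩
  · infer_instance
  · intro n
    set u : List ℕ := (Nat.digits k n).reverse with hu_def
    have hu : ∀ d ∈ u, d < k := by
      intro d hd
      exact Nat.digits_lt_base (by omega) (List.mem_reverse.mp hd)
    have hval : val k u = n := by
      simp [val, hu_def, Nat.ofDigits_digits]
    have h1 : out ((u.foldl (dS (V := V) k δ) ((q0, false), fun _ v => v)).1.1) = x n := by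
      rw [fst_foldl_dS k δ φ u _]
      rw [hx_val u hu, hval]
    have h2 : (u.foldl (dS (V := V) k δ) ((q0, false), fun _ v => v)).2
        (tau φ out) v0 = Ps φ x 0 n v0 := by
      have := hG u hu 0 v0
      simpa [hval] using this
    simp only []
    rw [hPfx n v0, ← h1, ← h2]
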